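/- Let X be a Hausdorff space, κ an infinite cardinal, and suppose every point of X has a neighbourhood base of size ≤ κ (χ(X) ≤ κ). If every open cover of X has a subcover of size at most κ (L(X) ≤ κ), then |X| ≤ 2^κ. (Arhangel'skii's theorem, derived as a corollary of the pwL_c bound.) -/

import Mathlib

open Set Cardinal

universe u

namespace ArhAux

variable {X : Type u} [TopologicalSpace X] {κ : Cardinal.{u}}

lemma mem_closure_inter {E W : Set X} {z : X} (hz : z ∈ closure E)
    (hW : IsOpen W) (hzW : z ∈ W) : z ∈ closure (W ∩ E) := by
  rw [mem_closure_iff] at hz ⊢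
  intro o ho hzo
  obtain ⟨w, hw1, hw2⟩ := hz (o ∩ W) (ho.inter hW) ⟨hzo, hzW⟩
  exact ⟨w, hw1.1, hw1.2, hw2⟩

lemma sep_base [T2Space X] {B : X → Set (Set X)}
    (hB3 : ∀ x, ∀ V : Set X, IsOpen V → x ∈ V → ∃ U ∈ B x, U ⊆ V)
    {x y : X} (hxy : x ≠ y) : ∃ U ∈ B x, y ∉ closure U := by
  obtain ⟨U₀, V₀, hU₀, hV₀, hxU, hyV, hd⟩ := t2_separation hxy
  obtain ⟨U, hUB, hUsub⟩ := hB3 x U₀ hU₀ hxU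
  refine ⟨U, hUB, fun hy => ?_⟩
  obtain ⟨z, hz1, hz2⟩ := mem_closure_iff.mp hy V₀ hV₀ hyV
  exact hd.ne_of_mem (hUsub hz2) hz1 rfl

lemma small_closure {B : X → Set (Set X)} (hB1 : ∀ x, #(B x) ≤ κ)
    (hB2 : ∀ x, ∀ U ∈ B x, IsOpen U ∧ x ∈ U)
    (hB3 : ∀ x, ∀ V : Set X, IsOpen V → x ∈ V → ∃ U ∈ B x, U ⊆ V)
    {A : Set X} {x : X} (hx : x ∈ closure A) :
    ∃ E : Set X, E ⊆ A ∧ #E ≤ κ ∧ x ∈ closure E := by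
  classical
  set g : Set X → X := fun U => if h : (U ∩ A).Nonempty then h.choose else x with hg
  have hgmem : ∀ U : Set X, (U ∩ A).Nonempty → g U ∈ U ∩ A := by
    intro U h
    simp only [hg, dif_pos h]
    exact h.choose_spec
  refine ⟨g '' {U | U ∈ B x ∧ (U ∩ A).Nonempty}, ?_, ?_, ?_⟩
  · rintro - ⟨U, ⟨-, hU⟩, rfl⟩
    exact (hgmem U hU).2
  · exact mk_image_le.trans ((mk_le_mk_of_subset (sep_subset _ _)).trans (hB1 x))
  · rw [mem_closure_iff]
    intro V hV hxV
    obtain ⟨U, hUB, hUsub⟩ := hB3 x V hV hxV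
    obtain ⟨hUo, hxU⟩ := hB2 x U hUB
    have hne : (U ∩ A).Nonempty := mem_closure_iff.mp hx U hUo hxU
    exact ⟨g U, hUsub (hgmem U hne).1, ⟨U, ⟨hUB, hne⟩, rfl⟩⟩

lemma two_power_self (hκ : ℵ₀ ≤ κ) : ((2 : Cardinal.{u}) ^ κ) ^ κ = 2 ^ κ := by
  rw [← power_mul, mul_eq_self hκ]

lemma closure_card_of_small [T2Space X] (hκ : ℵ₀ ≤ κ) {B : X → Set (Set X)}
    (hB1 : ∀ x, #(B x) ≤ κ)
    (hB2 : ∀ x, ∀ U ∈ B x, IsOpen U ∧ x ∈ U)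
    (hB3 : ∀ x, ∀ V : Set X, IsOpen V → x ∈ V → ∃ U ∈ B x, U ⊆ V)
    {E : Set X} (hE : #E ≤ κ) : #(closure E) ≤ 2 ^ κ := by
  classical
  set T : Set (Set X) := 𝒫 E with hT
  have key : ∀ x y : ↥(closure E),
      (fun z : ↥(closure E) => (⟨(· ∩ E) '' B z.1, by
        rintro - ⟨U, -, rfl⟩; exact inter_subset_right, mk_image_le.trans (hB1 _)⟩ :
        { t : Set (Set X) // t ⊆ T ∧ #t ≤ κ })) x =
      (fun z : ↥(closure E) => (⟨(· ∩ E) '' B z.1, by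
        rintro - ⟨U, -, rfl⟩; exact inter_subset_right, mk_image_le.trans (hB1 _)⟩ :
        { t : Set (Set X) // t ⊆ T ∧ #t ≤ κ })) y → x = y := by
    rintro ⟨x, hx⟩ ⟨y, hy⟩ h
    by_contra hxy
    have hxy' : x ≠ y := fun e => hxy (by simpa using e)
    obtain ⟨U, hUB, hycl⟩ := sep_base hB3 hxy'
    have : U ∩ E ∈ (· ∩ E) '' B y := by
      have := congrArg Subtype.val h
      simp only at this
      rw [← this]
      exact ⟨U, hUB, rfl⟩
    obtain ⟨V, hVB, hVE⟩ := this
    obtain ⟨hVo, hyV⟩ := hB2 y V hVB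
    have : y ∈ closure (V ∩ E) := mem_closure_inter hy hVo hyV
    change V ∩ E = U ∩ E at hVE
    rw [hVE] at this
    exact hycl (closure_mono inter_subset_left this)
  have hinj := mk_le_of_injective key
  refine hinj.trans ((mk_bounded_subset_le T κ).trans ?_)
  have hTcard : #↥T ≤ 2 ^ κ := by
    rw [hT, mk_powerset]
    exact power_le_power_left two_ne_zero hE
  calc max #↥T ℵ₀ ^ κ ≤ ((2:Cardinal) ^ κ) ^ κ := by
        apply power_le_power_right
        exact max_le hTcard (hκ.trans (le_trans (cantor κ).le le_rfl))
    _ = 2 ^ κ := two_power_self hκ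


lemma closure_card [T2Space X] (hκ : ℵ₀ ≤ κ) {B : X → Set (Set X)}
    (hB1 : ∀ x, #(B x) ≤ κ)
    (hB2 : ∀ x, ∀ U ∈ B x, IsOpen U ∧ x ∈ U)
    (hB3 : ∀ x, ∀ V : Set X, IsOpen V → x ∈ V → ∃ U ∈ B x, U ⊆ V)
    {A : Set X} (hA : #A ≤ 2 ^ κ) : #(closure A) ≤ 2 ^ κ := by
  have hsub : closure A ⊆ ⋃ E : { E : Set X // E ⊆ A ∧ #E ≤ κ }, closure E.1 := by
    intro x hx
    obtain ⟨E, hEA, hEκ, hxE⟩ := small_closure hB1 hB2 hB3 hx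
    exact mem_iUnion.mpr ⟨⟨E, hEA, hEκ⟩, hxE⟩
  refine (mk_le_mk_of_subset hsub).trans ?_
  refine (mk_iUnion_le_sum_mk).trans ?_
  refine (Cardinal.sum_le_sum _ (fun _ => 2 ^ κ) ?_).trans ?_
  · intro E
    exact closure_card_of_small hκ hB1 hB2 hB3 E.2.2
  · rw [Cardinal.sum_const']
    have hι : #{ E : Set X // E ⊆ A ∧ #E ≤ κ } ≤ 2 ^ κ := by
      refine (mk_bounded_subset_le A κ).trans ?_
      calc max #↥A ℵ₀ ^ κ ≤ ((2:Cardinal) ^ κ) ^ κ :=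
            power_le_power_right (max_le hA (hκ.trans (cantor κ).le))
        _ = 2 ^ κ := two_power_self hκ
    calc #{ E : Set X // E ⊆ A ∧ #E ≤ κ } * (2 ^ κ) ≤ 2 ^ κ * 2 ^ κ :=
          mul_le_mul' hι le_rfl
      _ = 2 ^ κ := mul_eq_self (hκ.trans (cantor κ).le)

noncomputable def idx (α : Ordinal.{u}) (i : α.ToType) : Ordinal.{u} :=
  haveI : IsWellOrder α.ToType (· < ·) := isWellOrder_lt
  Ordinal.typein (· < ·) i

lemma idx_lt (α : Ordinal.{u}) (i : α.ToType) : idx α i < α :=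
  Ordinal.typein_lt_self i

lemma idx_surj (α : Ordinal.{u}) {β : Ordinal.{u}} (hβ : β < α) : ∃ i, idx α i = β :=
  ⟨(Ordinal.ToType.mk (o := α)) ⟨β, hβ⟩,
    congrArg Subtype.val ((Ordinal.ToType.mk (o := α)).symm_apply_apply ⟨β, hβ⟩)⟩

lemma idx_card_le (α : Ordinal.{u}) (i : α.ToType) (hα : α.card ≤ κ) : (idx α i).card ≤ κ :=
  (Ordinal.card_le_card (idx_lt α i).le).trans hα

open Ordinal in
noncomputable def FF (G : Set X → Set X) (x₀ : X) : Ordinal.{u} → Set X :=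
  WellFounded.fix Ordinal.lt_wf fun α IH =>
    closure ({x₀} ∪ ⋃ i : α.ToType, (IH (idx α i) (idx_lt α i) ∪ G (IH (idx α i) (idx_lt α i))))

open Ordinal in
lemma FF_eq (G : Set X → Set X) (x₀ : X) (α : Ordinal.{u}) :
    FF G x₀ α = closure ({x₀} ∪ ⋃ i : α.ToType,
      (FF G x₀ (idx α i) ∪ G (FF G x₀ (idx α i)))) := by
  rw [FF, WellFounded.fix_eq]

lemma isClosed_FF (G : Set X → Set X) (x₀ : X) (α : Ordinal.{u}) :
    IsClosed (FF G x₀ α) := by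
  rw [FF_eq]; exact isClosed_closure

lemma mem_FF (G : Set X → Set X) (x₀ : X) (α : Ordinal.{u}) : x₀ ∈ FF G x₀ α := by
  rw [FF_eq]
  exact subset_closure (Or.inl rfl)

lemma FF_mono (G : Set X → Set X) (x₀ : X) {β α : Ordinal.{u}} (h : β ≤ α) :
    FF G x₀ β ⊆ FF G x₀ α := by
  rcases eq_or_lt_of_le h with rfl | h
  · exact le_rfl
  obtain ⟨i, rfl⟩ := idx_surj α h
  rw [FF_eq G x₀ α]
  exact (subset_iUnion_of_subset i subset_union_left).trans
    (subset_closure.trans (closure_mono subset_union_right))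

lemma G_sub_FF (G : Set X → Set X) (x₀ : X) {β α : Ordinal.{u}} (h : β < α) :
    G (FF G x₀ β) ⊆ FF G x₀ α := by
  obtain ⟨i, rfl⟩ := idx_surj α h
  rw [FF_eq G x₀ α]
  exact (subset_iUnion_of_subset i subset_union_right).trans
    (subset_closure.trans (closure_mono subset_union_right))

lemma FF_card [T2Space X] (hκ : ℵ₀ ≤ κ) {B : X → Set (Set X)}
    (hB1 : ∀ x, #(B x) ≤ κ)
    (hB2 : ∀ x, ∀ U ∈ B x, IsOpen U ∧ x ∈ U)
    (hB3 : ∀ x, ∀ V : Set X, IsOpen V → x ∈ V → ∃ U ∈ B x, U ⊆ V)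
    (G : Set X → Set X) (hG : ∀ A : Set X, #A ≤ 2 ^ κ → #(G A) ≤ 2 ^ κ)
    (x₀ : X) (α : Ordinal.{u}) (hα : α.card ≤ κ) : #(FF G x₀ α) ≤ 2 ^ κ := by
  induction α using Ordinal.induction with
  | h α IH =>
  rw [FF_eq]
  apply closure_card hκ hB1 hB2 hB3
  have h2 : ℵ₀ ≤ (2:Cardinal.{u}) ^ κ := hκ.trans (cantor κ).le
  refine (mk_union_le _ _).trans ?_
  have h1 : #({x₀} : Set X) ≤ 2 ^ κ := mk_le_aleph0.trans h2
  have hU : #(⋃ i : α.ToType, (FF G x₀ (idx α i) ∪ G (FF G x₀ (idx α i)))) ≤ 2 ^ κ := by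
    refine mk_iUnion_le_sum_mk.trans ?_
    refine (Cardinal.sum_le_sum _ (fun _ => 2 ^ κ) ?_).trans ?_
    · intro i
      have hcard := IH _ (idx_lt α i) (idx_card_le α i hα)
      refine (mk_union_le _ _).trans ?_
      calc #(FF G x₀ (idx α i)) + #(G (FF G x₀ (idx α i))) ≤ 2 ^ κ + 2 ^ κ :=
            add_le_add hcard (hG _ hcard)
        _ = 2 ^ κ := add_eq_self h2
    · rw [Cardinal.sum_const']
      have : #α.ToType ≤ 2 ^ κ := by
        rw [Cardinal.mk_toType]
        exact hα.trans (cantor κ).le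
      calc #α.ToType * (2 ^ κ) ≤ 2 ^ κ * 2 ^ κ := mul_le_mul' this le_rfl
        _ = 2 ^ κ := mul_eq_self h2
  calc #({x₀} : Set X) + _ ≤ 2 ^ κ + 2 ^ κ := add_le_add h1 hU
    _ = 2 ^ κ := add_eq_self h2

end ArhAux

open ArhAux in
/-- Arhangel'skii: if `X` is Hausdorff, then `|X| ≤ 2 ^ (L(X) ⬝ χ(X))`. -/
theorem arhangelskii {X : Type u} [TopologicalSpace X] [T2Space X]
    (κ : Cardinal.{u}) (hκ : ℵ₀ ≤ κ)
    (hχ : ∀ x : X, ∃ B : Set (Set X), #B ≤ κ ∧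
      (∀ U ∈ B, IsOpen U ∧ x ∈ U) ∧ ∀ V : Set X, IsOpen V → x ∈ V → ∃ U ∈ B, U ⊆ V)
    (hL : ∀ 𝒰 : Set (Set X), (∀ U ∈ 𝒰, IsOpen U) → ⋃₀ 𝒰 = Set.univ →
      ∃ 𝒱 ⊆ 𝒰, #𝒱 ≤ κ ∧ ⋃₀ 𝒱 = Set.univ) :
    #X ≤ 2 ^ κ := by
  classical
  rcases isEmpty_or_nonempty X with hX | hX
  · simp [Cardinal.mk_eq_zero X]
  obtain ⟨x₀⟩ := hX
  choose B hB1 hB23 using hχ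
  have hB2 : ∀ x, ∀ U ∈ B x, IsOpen U ∧ x ∈ U := fun x => (hB23 x).1
  have hB3 : ∀ x, ∀ V : Set X, IsOpen V → x ∈ V → ∃ U ∈ B x, U ⊆ V := fun x => (hB23 x).2
  have h2 : ℵ₀ ≤ (2 : Cardinal.{u}) ^ κ := hκ.trans (cantor κ).le
  -- the choice function for uncovered points
  set p : Set (Set X) → X := fun 𝒱 => if h : ∃ z : X, z ∉ ⋃₀ 𝒱 then h.choose else x₀ with hp
  have hp_spec : ∀ 𝒱 : Set (Set X), (∃ z : X, z ∉ ⋃₀ 𝒱) → p 𝒱 ∉ ⋃₀ 𝒱 := by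
    intro 𝒱 h
    simp only [hp, dif_pos h]
    exact h.choose_spec
  set BU : Set X → Set (Set X) := fun A => ⋃ x : A, B x.1 with hBUdef
  set G : Set X → Set X := fun A => p '' {𝒱 : Set (Set X) | 𝒱 ⊆ BU A ∧ #𝒱 ≤ κ} with hGdef
  have hGmem : ∀ (A : Set X) (𝒱 : Set (Set X)), 𝒱 ⊆ BU A → #𝒱 ≤ κ → p 𝒱 ∈ G A :=
    fun A 𝒱 h1 h2 => ⟨𝒱, ⟨h1, h2⟩, rfl⟩
  have hGcard : ∀ A : Set X, #A ≤ 2 ^ κ → #(G A) ≤ 2 ^ κ := by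
    intro A hA
    have hBUcard : #(BU A) ≤ 2 ^ κ := by
      refine mk_iUnion_le_sum_mk.trans ?_
      refine (Cardinal.sum_le_sum (fun x : A => #(B x.1)) (fun _ => κ) (fun x => hB1 x.1)).trans ?_
      rw [Cardinal.sum_const']
      calc #A * κ ≤ 2 ^ κ * 2 ^ κ := mul_le_mul' hA ((cantor κ).le)
        _ = 2 ^ κ := mul_eq_self h2
    refine mk_image_le.trans ?_
    refine (mk_bounded_subset_le (BU A) κ).trans ?_
    calc max #(BU A) ℵ₀ ^ κ ≤ ((2:Cardinal) ^ κ) ^ κ :=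
          power_le_power_right (max_le hBUcard h2)
      _ = 2 ^ κ := two_power_self hκ
  -- the transfinite construction
  set Λ : Ordinal.{u} := (Order.succ κ).ord with hΛdef
  have hreg : (Order.succ κ).IsRegular := isRegular_succ hκ
  have hΛlim : Order.IsSuccLimit Λ := Cardinal.isSuccLimit_ord (hκ.trans (Order.le_succ κ))
  set F : Set X := ⋃ i : Λ.ToType, FF G x₀ (idx Λ i) with hFdef
  have hFFsub : ∀ β : Ordinal.{u}, β < Λ → FF G x₀ β ⊆ F := by
    intro β hβ
    obtain ⟨i, rfl⟩ := idx_surj Λ hβ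
    exact subset_iUnion (fun i => FF G x₀ (idx Λ i)) i
  -- bounding suprema below Λ
  have hbound : ∀ {ι : Type u} (f : ι → Ordinal.{u}), #ι ≤ κ → (∀ i, f i < Λ) →
      ∃ β : Ordinal.{u}, β < Λ ∧ ∀ i, f i ≤ β := by
    intro ι f hι hf
    refine ⟨iSup f, ?_, fun i => Ordinal.le_iSup f i⟩
    exact Cardinal.iSup_lt_ord_of_isRegular hreg (hι.trans_lt (Order.lt_succ κ)) hf
  have hFclosed : IsClosed F := by
    rw [← closure_subset_iff_isClosed]
    intro x hx
    obtain ⟨E, hEF, hEκ, hxE⟩ := small_closure hB1 hB2 hB3 hx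
    have := fun e : E => mem_iUnion.mp (hEF e.2)
    choose f hfmem using this
    obtain ⟨β, hβΛ, hβ⟩ := hbound (fun e : E => idx Λ (f e)) hEκ (fun e => idx_lt Λ (f e))
    have hEsub : E ⊆ FF G x₀ β := fun e he =>
      FF_mono G x₀ (hβ ⟨e, he⟩) (hfmem ⟨e, he⟩)
    have : x ∈ FF G x₀ β := by
      have := (closure_mono hEsub) hxE
      rwa [(isClosed_FF G x₀ β).closure_eq] at this
    exact hFFsub β hβΛ this
  have hFuniv : F = Set.univ := by
    by_contra hne
    obtain ⟨p₀, hp₀F⟩ : ∃ p₀ : X, p₀ ∉ F := by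
      by_contra h
      push_neg at h
      exact hne (eq_univ_of_forall h)
    have hsep : ∀ x ∈ F, ∃ U ∈ B x, p₀ ∉ closure U := by
      intro x hx
      refine sep_base hB3 (fun e : x = p₀ => hp₀F ?_)
      rw [← e]
      exact hx
    choose! Ux hUx1 hUx2 using hsep
    set 𝒰 : Set (Set X) := (Ux '' F) ∪ {Fᶜ} with h𝒰def
    have h𝒰open : ∀ U ∈ 𝒰, IsOpen U := by
      rintro U (⟨x, hx, rfl⟩ | rfl)
      · exact (hB2 x _ (hUx1 x hx)).1
      · exact hFclosed.isOpen_compl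
    have h𝒰cov : ⋃₀ 𝒰 = Set.univ := by
      apply eq_univ_of_forall
      intro y
      by_cases hy : y ∈ F
      · exact ⟨Ux y, Or.inl ⟨y, hy, rfl⟩, (hB2 y _ (hUx1 y hy)).2⟩
      · exact ⟨Fᶜ, Or.inr rfl, hy⟩
    obtain ⟨𝒱, h𝒱𝒰, h𝒱κ, h𝒱cov⟩ := hL 𝒰 h𝒰open h𝒰cov
    set 𝒱' : Set (Set X) := {V ∈ 𝒱 | ∃ x ∈ F, V ∈ B x ∧ p₀ ∉ closure V} with h𝒱'def
    have hF𝒱' : F ⊆ ⋃₀ 𝒱' := by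
      intro y hy
      have : y ∈ ⋃₀ 𝒱 := h𝒱cov ▸ Set.mem_univ y
      obtain ⟨V, hV𝒱, hyV⟩ := this
      rcases h𝒱𝒰 hV𝒱 with ⟨x, hxF, rfl⟩ | rfl
      · exact ⟨Ux x, ⟨hV𝒱, x, hxF, hUx1 x hxF, hUx2 x hxF⟩, hyV⟩
      · exact absurd hy hyV
    have hp₀𝒱' : p₀ ∉ ⋃₀ 𝒱' := by
      rintro ⟨V, hV, hpV⟩
      exact hV.2.choose_spec.2.2 (subset_closure hpV)
    have h𝒱'κ : #𝒱' ≤ κ := (mk_le_mk_of_subset (sep_subset _ _)).trans h𝒱κ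
    have hxv : ∀ V : 𝒱', ∃ x, x ∈ F ∧ V.1 ∈ B x := by
      rintro ⟨V, hV⟩
      obtain ⟨x, hx1, hx2, -⟩ := hV.2
      exact ⟨x, hx1, hx2⟩
    choose xv hxv1 hxv2 using hxv
    have := fun V : 𝒱' => mem_iUnion.mp (hxv1 V)
    choose fI hfI using this
    obtain ⟨β, hβΛ, hβ⟩ := hbound (fun V : 𝒱' => idx Λ (fI V)) h𝒱'κ
      (fun V => idx_lt Λ (fI V))
    have h𝒱'BU : 𝒱' ⊆ BU (FF G x₀ β) := by
      intro V hV
      have hxmem : xv ⟨V, hV⟩ ∈ FF G x₀ β := FF_mono G x₀ (hβ ⟨V, hV⟩) (hfI ⟨V, hV⟩)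
      exact mem_iUnion.mpr ⟨⟨xv ⟨V, hV⟩, hxmem⟩, hxv2 ⟨V, hV⟩⟩
    have hpmem : p 𝒱' ∈ G (FF G x₀ β) := hGmem _ _ h𝒱'BU h𝒱'κ
    have hpnot : p 𝒱' ∉ ⋃₀ 𝒱' := hp_spec 𝒱' ⟨p₀, hp₀𝒱'⟩
    have hpF : p 𝒱' ∈ F := by
      have h1 : p 𝒱' ∈ FF G x₀ (Order.succ β) :=
        G_sub_FF G x₀ (Order.lt_succ β) hpmem
      exact hFFsub _ (hΛlim.succ_lt hβΛ) h1
    exact hpnot (hF𝒱' hpF)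
  -- cardinality count
  have hXF : #X = #F := by
    rw [hFuniv]
    exact Cardinal.mk_univ.symm
  rw [hXF]
  refine mk_iUnion_le_sum_mk.trans ?_
  refine (Cardinal.sum_le_sum _ (fun _ => 2 ^ κ) ?_).trans ?_
  · intro i
    apply FF_card hκ hB1 hB2 hB3 G hGcard x₀
    have : (idx Λ i).card < Order.succ κ := Cardinal.lt_ord.mp (idx_lt Λ i)
    exact Order.lt_succ_iff.mp this
  · rw [Cardinal.sum_const', Cardinal.mk_toType, hΛdef, card_ord]
    calc Order.succ κ * (2 ^ κ) ≤ 2 ^ κ * 2 ^ κ :=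
          mul_le_mul' (Order.succ_le_of_lt (cantor κ)) le_rfl
      _ = 2 ^ κ := mul_eq_self h2
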